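/- The localization forcing LOC_{b,h} is σ-soft-linked; moreover, this is witnessed by the sets L_{b,h}(s,m) = {(p,n) ∈ LOC_{b,h} : s ⊆ p, n = |s|, and |p(i)| ≤ m for all i} for s ∈ S_{<ω}(b,h) and m ∈ ω: each L_{b,h}(s,m) is leaf-linked, their union is dense in LOC_{b,h}, and if (p,n) ∈ L_{b,h}(s,m) and (p',n') ∈ L_{b,h}(s',m') are compatible with |s| ≤ |s'|, then they have a common extension in L_{b,h}(s', m+m'). -/
import Mathlib


universe u

variable {α : Type u} [Preorder α]

/-- `p` and `q` are compatible: some `r` extends both. -/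
def Compat (p q : α) : Prop := ∃ r : α, r ≤ p ∧ r ≤ q

/-- `A` is a maximal antichain: pairwise incompatible, and every condition is
compatible with a member of `A`. -/
def IsMaxAC (A : Set α) : Prop :=
  (∀ p ∈ A, ∀ q ∈ A, p ≠ q → ¬Compat p q) ∧ ∀ p : α, ∃ q ∈ A, Compat p q

/-- `Q` is leaf-linked: for every maximal antichain enumerated as `{p n : n ∈ ω}`
there is `n` such that every `q ∈ Q` is compatible with some `p j`, `j < n`. -/
def LeafLinked (Q : Set α) : Prop :=
  ∀ p : ℕ → α, IsMaxAC (Set.range p) → ∃ n : ℕ, ∀ q ∈ Q, ∃ j < n, Compat q (p j)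

/-- `D` is dense in the preorder. -/
def DenseSub (D : Set α) : Prop := ∀ p : α, ∃ q ∈ D, q ≤ p

/-- The countable chain condition: every antichain is countable. -/
def CCC (α : Type u) [Preorder α] : Prop :=
  ∀ A : Set α, (∀ p ∈ A, ∀ q ∈ A, p ≠ q → ¬Compat p q) → A.Countable

/-- `P` is σ-soft-linked. -/
def SigmaSoftLinked (α : Type u) [Preorder α] : Prop :=
  ∃ Q : ℕ → Set α, (∀ n, LeafLinked (Q n)) ∧ DenseSub (⋃ n, Q n) ∧
    ∀ n n' : ℕ, ∃ k : ℕ, ∀ p ∈ Q n, ∀ q ∈ Q n',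
      Compat p q → ∃ r ∈ Q k, r ≤ p ∧ r ≤ q

/-- Conditions of the localization forcing `LOC_{b,hgt}`: pairs `(p, n)` with
`p ∈ S(b,hgt)` a slalom (`p i ⊆ b i`, `|p i| ≤ hgt i`) which is uniformly
bounded (`∃ m ∀ i, |p i| ≤ m`). -/
def LocCond (b hgt : ℕ → ℕ) : Type :=
  {p : (ℕ → Finset ℕ) × ℕ //
    (∀ i, p.1 i ⊆ Finset.range (b i) ∧ (p.1 i).card ≤ hgt i) ∧
    ∃ m : ℕ, ∀ i, (p.1 i).card ≤ m}

/-- The order of `LOC_{b,hgt}`: `(p',n') ≤ (p,n)` iff `n ≤ n'`,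
`p'↾n = p↾n` and `p i ⊆ p' i` for all `i`. -/
instance (b hgt : ℕ → ℕ) : Preorder (LocCond b hgt) where
  le x y := y.1.2 ≤ x.1.2 ∧ (∀ i < y.1.2, x.1.1 i = y.1.1 i) ∧
    ∀ i, y.1.1 i ⊆ x.1.1 i
  le_refl x := ⟨le_rfl, fun _ _ => rfl, fun _ => subset_rfl⟩
  le_trans x y z hxy hyz :=
    ⟨hyz.1.trans hxy.1,
      fun i hi => (hxy.2.1 i (lt_of_lt_of_le hi hyz.1)).trans (hyz.2.1 i hi),
      fun i => (hyz.2.2 i).trans (hxy.2.2 i)⟩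

/-- `s ∈ S_{<ω}(b,hgt)`: a finite sequence of finite sets with
`s k ⊆ b k` and `|s k| ≤ hgt k`. -/
def FinSlalom (b hgt : ℕ → ℕ) (s : List (Finset ℕ)) : Prop :=
  ∀ (k : ℕ) (hk : k < s.length),
    s[k] ⊆ Finset.range (b k) ∧ (s[k]).card ≤ hgt k

/-- The set `L_{b,hgt}(s,m) = {(p,n) : s ⊆ p, n = |s|, ∀ i |p i| ≤ m}`. -/
def LocSet (b hgt : ℕ → ℕ) (s : List (Finset ℕ)) (m : ℕ) :
    Set (LocCond b hgt) :=
  {p | (∀ (k : ℕ) (hk : k < s.length), p.1.1 k = s[k]) ∧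
    p.1.2 = s.length ∧ ∀ i, (p.1.1 i).card ≤ m}

/-- The localization forcing `LOC_{b,hgt}` is σ-soft-linked, witnessed by the
sets `L_{b,hgt}(s,m)`: each is leaf-linked, their union is dense, and
compatible members of `L(s,m)` and `L(s',m')` with `|s| ≤ |s'|` have a common
extension in `L(s', m + m')`. -/
lemma aux_ext (b hgt : ℕ → ℕ) (s s' : List (Finset ℕ)) (m m' : ℕ)
    (hlen : s.length ≤ s'.length)
    (p : LocCond b hgt) (hp : p ∈ LocSet b hgt s m)
    (q : LocCond b hgt) (hq : q ∈ LocSet b hgt s' m')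
    (hc : Compat p q) :
    ∃ r ∈ LocSet b hgt s' (m + m'), r ≤ p ∧ r ≤ q := by
  obtain ⟨t, htp, htq⟩ := hc
  have hsub : ∀ i < s'.length, p.1.1 i ⊆ q.1.1 i := by
    intro i hi
    have h1 : p.1.1 i ⊆ t.1.1 i := htp.2.2 i
    have h2 : t.1.1 i = q.1.1 i := htq.2.1 i (by rw [hq.2.1]; exact hi)
    rw [← h2]; exact h1
  refine ⟨⟨(fun i => p.1.1 i ∪ q.1.1 i, s'.length), ?_, ⟨m + m', ?_⟩⟩, ⟨?_, rfl, ?_⟩, ?_, ?_⟩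
  · intro i
    have hsub2 : p.1.1 i ∪ q.1.1 i ⊆ t.1.1 i :=
      Finset.union_subset (htp.2.2 i) (htq.2.2 i)
    exact ⟨hsub2.trans (t.2.1 i).1, (Finset.card_le_card hsub2).trans (t.2.1 i).2⟩
  · intro i
    exact (Finset.card_union_le _ _).trans (Nat.add_le_add (hp.2.2 i) (hq.2.2 i))
  · intro k hk
    have := hsub k hk
    simp only
    rw [Finset.union_eq_right.mpr this]
    exact hq.1 k hk
  · intro i
    exact (Finset.card_union_le _ _).trans (Nat.add_le_add (hp.2.2 i) (hq.2.2 i))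
  · refine ⟨hp.2.1.trans_le hlen, ?_, fun i => Finset.subset_union_left⟩
    intro i hi
    have hi' : i < s.length := by rwa [hp.2.1] at hi
    have hqi : q.1.1 i ⊆ p.1.1 i := by
      have h1 : t.1.1 i = p.1.1 i := htp.2.1 i hi
      have h2 : q.1.1 i ⊆ t.1.1 i := htq.2.2 i
      rw [← h1]; exact h2
    exact Finset.union_eq_left.mpr hqi
  · refine ⟨hq.2.1.le, ?_, fun i => Finset.subset_union_right⟩
    intro i hi
    have hi' : i < s'.length := by rwa [hq.2.1] at hi
    exact Finset.union_eq_right.mpr (hsub i hi')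

lemma aux_leaf (b hgt : ℕ → ℕ)
    (hinf : Filter.Tendsto hgt Filter.atTop Filter.atTop)
    (s : List (Finset ℕ)) (m : ℕ) : LeafLinked (LocSet b hgt s m) := by
  intro A hA
  by_contra hcon
  push_neg at hcon
  choose q hqmem hqinc using hcon
  -- a nonprincipal ultrafilter
  obtain ⟨U, hU⟩ := Ultrafilter.exists_le (Filter.cofinite : Filter ℕ)
  -- pointwise ultrafilter limit
  have key : ∀ i, ∃ v : Finset ℕ, {n | (q n).1.1 i = v} ∈ U := by
    intro i
    have hfin : ({t : Finset ℕ | t ⊆ Finset.range (b i)}).Finite := by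
      refine (Finset.range (b i)).powerset.finite_toSet.subset ?_
      exact fun t ht => Finset.mem_powerset.mpr ht
    have hmem : {t : Finset ℕ | t ⊆ Finset.range (b i)} ∈
        U.map (fun n => (q n).1.1 i) := by
      rw [Ultrafilter.mem_map]
      exact Filter.univ_mem' (fun n => ((q n).2.1 i).1)
    obtain ⟨a, _, hpure⟩ := Ultrafilter.eq_pure_of_finite_mem hfin hmem
    refine ⟨a, ?_⟩
    have : {a} ∈ U.map (fun n => (q n).1.1 i) := by
      rw [hpure]; simp
    rwa [Ultrafilter.mem_map] at this
  choose v hv using key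
  have hUne : ∀ S ∈ U, S.Nonempty := fun S hS =>
    Filter.nonempty_of_mem hS
  -- v defines a condition in LocSet s m
  have hval : ∀ i, ∃ n, (q n).1.1 i = v i := by
    intro i; exact hUne _ (hv i)
  have qstar_cond : (∀ i, v i ⊆ Finset.range (b i) ∧ (v i).card ≤ hgt i) ∧
      ∃ M, ∀ i, (v i).card ≤ M := by
    constructor
    · intro i
      obtain ⟨n, hn⟩ := hval i
      rw [← hn]; exact (q n).2.1 i
    · refine ⟨m, fun i => ?_⟩
      obtain ⟨n, hn⟩ := hval i
      rw [← hn]; exact (hqmem n).2.2 i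
  set qstar : LocCond b hgt := ⟨(v, s.length), qstar_cond⟩ with hqstar
  have hqstarmem : qstar ∈ LocSet b hgt s m := by
    refine ⟨?_, rfl, fun i => ?_⟩
    · intro k hk
      obtain ⟨n, hn⟩ := hval k
      show v k = s[k]
      rw [← hn]; exact (hqmem n).1 k hk
    · obtain ⟨n, hn⟩ := hval i
      show (v i).card ≤ m
      rw [← hn]; exact (hqmem n).2.2 i
  -- qstar is compatible with some member of the maximal antichain
  obtain ⟨x, ⟨j, rfl⟩, r0, hr0q, hr0p⟩ := hA.2 qstar
  obtain ⟨M0, hM0⟩ := r0.2.2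
  -- choose N' large
  obtain ⟨N1, hN1⟩ := Filter.eventually_atTop.mp (hinf.eventually_ge_atTop (M0 + m))
  set N' : ℕ := max (max r0.1.2 N1) (j + 1) with hN'
  -- the set of n agreeing with v below N' is in U, hence infinite
  have hSU : {n | ∀ i < N', (q n).1.1 i = v i} ∈ U := by
    have h1 : (⋂ i ∈ Set.Iio N', {n | (q n).1.1 i = v i}) ∈ U :=
      (Filter.biInter_mem (Set.finite_Iio N')).mpr (fun i _ => hv i)
    refine Filter.mem_of_superset h1 ?_
    intro n hn i hi
    simp only [Set.mem_iInter] at hn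
    exact hn i hi
  have hSinf : {n | ∀ i < N', (q n).1.1 i = v i}.Infinite := by
    intro hfin
    have : {n | ∀ i < N', (q n).1.1 i = v i}ᶜ ∈ U :=
      hU (by rwa [Filter.mem_cofinite, compl_compl])
    have := Filter.inter_mem hSU this
    rw [Set.inter_compl_self] at this
    exact Filter.empty_notMem (U : Filter ℕ) this
  obtain ⟨n, hn⟩ := (hSinf.diff (Set.finite_Iic j)).nonempty
  have hnS : ∀ i < N', (q n).1.1 i = v i := hn.1
  have hjn : j < n := by simpa using hn.2
  have hvsub : ∀ i, v i ⊆ r0.1.1 i := hr0q.2.2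
  have hlensub : qstar.1.2 ≤ r0.1.2 := hr0q.1
  have hr0N : r0.1.2 ≤ N' := le_trans (le_max_left _ _) (le_max_left _ _)
  have tcond : (∀ i, r0.1.1 i ∪ (q n).1.1 i ⊆ Finset.range (b i) ∧
      (r0.1.1 i ∪ (q n).1.1 i).card ≤ hgt i) ∧
      ∃ M, ∀ i, (r0.1.1 i ∪ (q n).1.1 i).card ≤ M := by
    constructor
    · intro i
      by_cases hi : i < N'
      · have heq : r0.1.1 i ∪ (q n).1.1 i = r0.1.1 i := by
          refine Finset.union_eq_left.mpr ?_
          rw [hnS i hi]; exact hvsub i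
        rw [heq]; exact r0.2.1 i
      · push_neg at hi
        refine ⟨Finset.union_subset (r0.2.1 i).1 ((q n).2.1 i).1, ?_⟩
        refine (Finset.card_union_le _ _).trans ?_
        refine le_trans (Nat.add_le_add (hM0 i) ((hqmem n).2.2 i)) ?_
        exact hN1 i (le_trans (le_trans (le_max_right _ _) (le_max_left _ _)) hi)
    · refine ⟨M0 + m, fun i => ?_⟩
      exact (Finset.card_union_le _ _).trans
        (Nat.add_le_add (hM0 i) ((hqmem n).2.2 i))
  set tt : LocCond b hgt := ⟨(fun i => r0.1.1 i ∪ (q n).1.1 i, N'), tcond⟩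
  have httr0 : tt ≤ r0 := by
    refine ⟨hr0N, fun i hi => ?_, fun i => Finset.subset_union_left⟩
    show r0.1.1 i ∪ (q n).1.1 i = r0.1.1 i
    refine Finset.union_eq_left.mpr ?_
    rw [hnS i (lt_of_lt_of_le hi hr0N)]; exact hvsub i
  have httq : tt ≤ q n := by
    have hqn2 : (q n).1.2 = s.length := (hqmem n).2.1
    refine ⟨?_, fun i hi => ?_, fun i => Finset.subset_union_right⟩
    · show (q n).1.2 ≤ N'
      rw [hqn2]
      exact le_trans hlensub hr0N
    · have hi' : i < N' := lt_of_lt_of_le (by rwa [hqn2] at hi) (le_trans hlensub hr0N)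
      show r0.1.1 i ∪ (q n).1.1 i = (q n).1.1 i
      have h1 : r0.1.1 i = qstar.1.1 i := hr0q.2.1 i (by rw [hqn2] at hi; exact hi)
      have h2 : (q n).1.1 i = v i := hnS i hi'
      rw [h1, h2]
      exact Finset.union_eq_right.mpr subset_rfl
  exact hqinc n j hjn ⟨tt, httq, le_trans httr0 hr0p⟩

lemma aux_dense (b hgt : ℕ → ℕ) (p : LocCond b hgt) :
    ∃ s m, FinSlalom b hgt s ∧ p ∈ LocSet b hgt s m := by
  obtain ⟨m, hm⟩ := p.2.2
  refine ⟨List.ofFn (fun k : Fin p.1.2 => p.1.1 k), m, ?_, ?_, ?_, hm⟩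
  · intro k hk
    have hk' : k < p.1.2 := by simpa using hk
    simp only [List.getElem_ofFn]
    exact p.2.1 k
  · intro k hk
    have hk' : k < p.1.2 := by simpa using hk
    simp only [List.getElem_ofFn]
  · simp

theorem stmt16 (b hgt : ℕ → ℕ) (hb : ∀ i, 0 < b i) (hhb : ∀ i, hgt i ≤ b i)
    (hinf : Filter.Tendsto hgt Filter.atTop Filter.atTop)
    (hlim : Filter.Tendsto (fun i => (hgt i : ℝ) / (b i : ℝ))
      Filter.atTop (nhds 0)) :
    SigmaSoftLinked (LocCond b hgt) ∧
    (∀ (s : List (Finset ℕ)) (m : ℕ), FinSlalom b hgt s →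
      LeafLinked (LocSet b hgt s m)) ∧
    DenseSub (⋃ (s : List (Finset ℕ)) (_ : FinSlalom b hgt s) (m : ℕ),
      LocSet b hgt s m) ∧
    ∀ (s s' : List (Finset ℕ)) (m m' : ℕ), FinSlalom b hgt s →
      FinSlalom b hgt s' → s.length ≤ s'.length →
      ∀ p ∈ LocSet b hgt s m, ∀ q ∈ LocSet b hgt s' m',
        Compat p q → ∃ r ∈ LocSet b hgt s' (m + m'), r ≤ p ∧ r ≤ q := by
  have mainA : ∀ (s : List (Finset ℕ)) (m : ℕ), LeafLinked (LocSet b hgt s m) :=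
    fun s m => aux_leaf b hgt hinf s m
  refine ⟨?_, fun s m _ => mainA s m, ?_, ?_⟩
  · refine ⟨fun n => (Encodable.decode (α := List (Finset ℕ) × ℕ) n).elim ∅
      (fun sm => LocSet b hgt sm.1 sm.2), ?_, ?_, ?_⟩
    · intro n
      cases h : Encodable.decode (α := List (Finset ℕ) × ℕ) n with
      | none =>
        simp only [h, Option.elim]
        exact fun p _ => ⟨0, fun q hq => absurd hq (Set.notMem_empty q)⟩
      | some sm =>
        simp only [h, Option.elim]
        exact mainA sm.1 sm.2
    · intro p
      obtain ⟨s, m, _, hp⟩ := aux_dense b hgt p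
      refine ⟨p, ?_, le_refl p⟩
      refine Set.mem_iUnion.mpr ⟨Encodable.encode ((s, m) : List (Finset ℕ) × ℕ), ?_⟩
      simp only [Encodable.encodek, Option.elim]
      exact hp
    · intro n n'
      cases h : Encodable.decode (α := List (Finset ℕ) × ℕ) n with
      | none =>
        refine ⟨0, fun p hp => ?_⟩
        simp only [h, Option.elim] at hp
        exact absurd hp (Set.notMem_empty p)
      | some sm =>
        cases h' : Encodable.decode (α := List (Finset ℕ) × ℕ) n' with
        | none =>
          refine ⟨0, fun p _ q hq => ?_⟩
          simp only [h', Option.elim] at hq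
          exact absurd hq (Set.notMem_empty q)
        | some sm' =>
          by_cases hlen : sm.1.length ≤ sm'.1.length
          · refine ⟨Encodable.encode ((sm'.1, sm.2 + sm'.2) : List (Finset ℕ) × ℕ),
              fun p hp q hq hc => ?_⟩
            simp only [h, h', Option.elim] at hp hq
            obtain ⟨r, hr, h1, h2⟩ := aux_ext b hgt sm.1 sm'.1 sm.2 sm'.2 hlen p hp q hq hc
            refine ⟨r, ?_, h1, h2⟩
            simp only [Encodable.encodek, Option.elim]
            exact hr
          · refine ⟨Encodable.encode ((sm.1, sm'.2 + sm.2) : List (Finset ℕ) × ℕ),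
              fun p hp q hq hc => ?_⟩
            simp only [h, h', Option.elim] at hp hq
            obtain ⟨x, hx1, hx2⟩ := hc
            obtain ⟨r, hr, h1, h2⟩ := aux_ext b hgt sm'.1 sm.1 sm'.2 sm.2
              (le_of_not_ge hlen) q hq p hp ⟨x, hx2, hx1⟩
            refine ⟨r, ?_, h2, h1⟩
            simp only [Encodable.encodek, Option.elim]
            exact hr
  · intro p
    obtain ⟨s, m, hs, hp⟩ := aux_dense b hgt p
    refine ⟨p, ?_, le_refl p⟩
    simp only [Set.mem_iUnion]
    exact ⟨s, hs, m, hp⟩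
  · intro s s' m m' _ _ hlen p hp q hq hc
    exact aux_ext b hgt s s' m m' hlen p hp q hq hc
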